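/- Let 1/2 < β ≤ 1 and 1−β < α < β, let (m̄_k)_{k≥0} be a nondecreasing sequence of integers with m̄_0 = 0 and m̄_1 ≥ 1, and let K ≥ 1 be an integer. Assume that for every integer n with 0 ≤ n < K + m̄_K: T_{α,β}^n(β) > α if n = k + m̄_k for some 0 ≤ k ≤ K−1, and T_{α,β}^n(β) ≤ α otherwise. Then T_{α,β}^{K+m̄_K}(β) = (−1)^{K−1} (β/(1−α))^K (β/α)^{m̄_K} · ( 1 − β + Σ_{k=1}^{K−1} ((α−1)/β)^k (α/β)^{m̄_k} ). -/

import Mathlib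

/-- The skew tent map `T_{α,β}`. -/
noncomputable def T (α β x : ℝ) : ℝ :=
  if x ≤ α then β / α * x else β / (1 - α) * (1 - x)

/-- If the orbit of `β` under `T_{α,β}` follows the pattern `R L^{m_1} R L^{m_2} ⋯` for the
first `K + m̄_K` steps, then
`T^{K+m̄_K}(β) = (-1)^{K-1} (β/(1-α))^K (β/α)^{m̄_K} (1 - β + ∑_{k=1}^{K-1} ((α-1)/β)^k (α/β)^{m̄_k})`. -/
theorem stmt14 (α β : ℝ) (hβ1 : 1 / 2 < β) (hβ2 : β ≤ 1)
    (hα1 : 1 - β < α) (hα2 : α < β)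
    (m : ℕ → ℕ) (hm0 : m 0 = 0) (hm1 : 1 ≤ m 1) (hmono : Monotone m)
    (K : ℕ) (hK : 1 ≤ K)
    (hpat : ∀ n : ℕ, n < K + m K →
      ((∃ k : ℕ, k ≤ K - 1 ∧ n = k + m k) → α < (T α β)^[n] β) ∧
      ((¬ ∃ k : ℕ, k ≤ K - 1 ∧ n = k + m k) → (T α β)^[n] β ≤ α)) :
    (T α β)^[K + m K] β =
      (-1 : ℝ) ^ (K - 1) * (β / (1 - α)) ^ K * (β / α) ^ (m K) *
        (1 - β + ∑ k ∈ Finset.range (K - 1),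
          ((α - 1) / β) ^ (k + 1) * (α / β) ^ (m (k + 1))) := by
  have hβ0 : 0 < β := by linarith
  have hα0 : 0 < α := by linarith
  have h1α : 0 < 1 - α := by linarith
  set x : ℕ → ℝ := fun n => (T α β)^[n] β with hx
  have hx0 : x 0 = β := rfl
  have hxsucc : ∀ n, x (n + 1) = T α β (x n) := fun n => by
    simp only [hx, Function.iterate_succ_apply']
  -- the "return times" n ↦ n + m n are monotone
  have nmono : ∀ j j', j ≤ j' → j + m j ≤ j' + m j' := fun j j' h => by
    have := hmono h; omega
  have nstrict : ∀ j j', j < j' → j + m j < j' + m j' := fun j j' h => by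
    have := hmono (le_of_lt h); omega
  -- a run of left-branch steps multiplies by (β/α) each time
  have Lrun : ∀ s d : ℕ, (∀ i, i < d → x (s + i) ≤ α) →
      x (s + d) = (β / α) ^ d * x s := by
    intro s d
    induction d with
    | zero => intro _; simp
    | succ d ih =>
      intro h
      have hd : x (s + d) ≤ α := h d (by omega)
      have : s + (d + 1) = (s + d) + 1 := by omega
      rw [this, hxsucc, T, if_pos hd, ih (fun i hi => h i (by omega)), pow_succ]
      ring
  -- one block: R then L^{m(k+1)-m k}
  have block : ∀ k, k < K →
      x ((k + 1) + m (k + 1)) =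
        (β / α) ^ (m (k + 1) - m k) * (β / (1 - α)) * (1 - x (k + m k)) := by
    intro k hkK
    have hmk : m k ≤ m (k + 1) := hmono (Nat.le_succ k)
    have hnlt : k + m k < K + m K := nstrict k K hkK
    have hR : α < x (k + m k) := (hpat _ hnlt).1 ⟨k, by omega, rfl⟩
    have step1 : x (k + m k + 1) = β / (1 - α) * (1 - x (k + m k)) := by
      rw [hxsucc, T, if_neg (not_le.mpr hR)]
    have hrun : x ((k + m k + 1) + (m (k + 1) - m k)) =
        (β / α) ^ (m (k + 1) - m k) * x (k + m k + 1) := by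
      apply Lrun
      intro i hi
      have hn2 : k + m k + 1 + i < (k + 1) + m (k + 1) := by omega
      have hged : k + 1 ≤ K := hkK
      have hnN : k + m k + 1 + i < K + m K :=
        lt_of_lt_of_le hn2 (nmono (k + 1) K hged)
      apply (hpat _ hnN).2
      rintro ⟨j, hj, hje⟩
      rcases le_or_gt j k with h | h
      · have := nmono j k h; omega
      · have := nmono (k + 1) j h; omega
    have hidx : (k + m k + 1) + (m (k + 1) - m k) = (k + 1) + m (k + 1) := by omega
    rw [← hidx, hrun, step1]
    ring
  -- main induction
  have main : ∀ k, 1 ≤ k → k ≤ K →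
      x (k + m k) = (-1 : ℝ) ^ (k - 1) * (β / (1 - α)) ^ k * (β / α) ^ (m k) *
        (1 - β + ∑ i ∈ Finset.range (k - 1),
          ((α - 1) / β) ^ (i + 1) * (α / β) ^ (m (i + 1))) := by
    intro k hk
    induction k, hk using Nat.le_induction with
    | base =>
      intro _
      have hb := block 0 (by omega)
      rw [show (0:ℕ) + m 0 = 0 by omega] at hb
      rw [show (0:ℕ) + 1 = 1 from rfl, hm0, hx0] at hb
      rw [hb]
      simp only [Nat.sub_self, pow_zero, one_mul, pow_one, Nat.sub_zero,
        Finset.range_zero, Finset.sum_empty, add_zero]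
      ring
    | succ k hk1 ih =>
      intro hkK
      have hxk := ih (by omega)
      have hb := block k (by omega)
      rw [hb, hxk]
      obtain ⟨j, rfl⟩ : ∃ j, k = j + 1 := ⟨k - 1, by omega⟩
      simp only [Nat.add_sub_cancel]
      rw [Finset.sum_range_succ]
      have hmk : m (j + 1) ≤ m (j + 1 + 1) := hmono (Nat.le_succ _)
      have hM : m (j + 1 + 1) = m (j + 1) + (m (j + 1 + 1) - m (j + 1)) := by omega
      rw [hM]
      generalize (∑ i ∈ Finset.range j,
          ((α - 1) / β) ^ (i + 1) * (α / β) ^ (m (i + 1))) = s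
      generalize hd : m (j + 1 + 1) - m (j + 1) = d
      generalize hMM : m (j + 1) = M
      have e1 : ((α - 1) / β) = -((β / (1 - α))⁻¹) := by
        rw [inv_div]; ring
      have e2 : (α / β : ℝ) = (β / α)⁻¹ := by rw [inv_div]
      rw [e1, e2, pow_add]
      have hu : (β / α : ℝ) ≠ 0 := by positivity
      have hv : (β / (1 - α) : ℝ) ≠ 0 := by positivity
      rcases neg_one_pow_eq_or ℝ j with hE | hE <;> rw [hE] <;>
        · rw [show ((-1 : ℝ)) ^ (j + 1) = -(-1) ^ j by ring, hE]
          rw [neg_pow, show ((-1 : ℝ)) ^ (j + 1) = -(-1) ^ j by ring, hE]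
          rw [Nat.add_sub_cancel_left, pow_add (β / α)]
          generalize β / α = u at hu ⊢
          generalize β / (1 - α) = v at hv ⊢
          simp only [inv_pow]
          field_simp
          ring
  have := main K hK le_rfl
  exact this
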